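/- Let G be a connected interval graph on n vertices with interval representation I, endpoint set B_all = {b_1,...,b_n}, and let k < n. Then min over edge sets X with |X| ≤ k of α(G/X) equals the minimum of |B| over all B ⊆ B_all such that at most k intervals of I are disjoint from B. -/

import Mathlib

def intervalGraph {n : ℕ} (J : Fin n → ℝ × ℝ) : SimpleGraph (Fin n) where
  Adj u v := u ≠ v ∧ (Set.Icc (J u).1 (J u).2 ∩ Set.Icc (J v).1 (J v).2).Nonempty
  symm := ⟨by
    rintro u v ⟨h, x, hx⟩
    exact ⟨h.symm, x, hx.2, hx.1⟩⟩
  loopless := ⟨by rintro v ⟨h, _⟩; exact h rfl⟩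

def edgeSub {V : Type*} (G : SimpleGraph V) (X : Set (Sym2 V)) : SimpleGraph V where
  Adj u v := G.Adj u v ∧ s(u, v) ∈ X
  symm := ⟨by rintro u v ⟨h, he⟩; exact ⟨h.symm, by rwa [Sym2.eq_swap]⟩⟩
  loopless := ⟨by rintro v ⟨h, _⟩; exact (G.ne_of_adj h) rfl⟩

def contract {V : Type*} (G : SimpleGraph V) (X : Set (Sym2 V)) :
    SimpleGraph (Quotient (edgeSub G X).reachableSetoid) where
  Adj c d := c ≠ d ∧ ∃ u v : V,
    Quotient.mk _ u = c ∧ Quotient.mk _ v = d ∧ G.Adj u v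
  symm := ⟨by rintro c d ⟨hne, u, v, hu, hv, h⟩; exact ⟨hne.symm, v, u, hv, hu, h.symm⟩⟩
  loopless := ⟨by rintro c ⟨hne, _⟩; exact hne rfl⟩

/-- The independence number: the maximum size of an independent set. -/
noncomputable def indepNum {W : Type*} (G : SimpleGraph W) : ℕ :=
  sSup {m : ℕ | ∃ s : Finset W,
    (↑s : Set W).Pairwise (fun u v => ¬ G.Adj u v) ∧ s.card = m}

lemma greedy {ι : Type*} [DecidableEq ι] (f : ι → ℝ × ℝ) :
    ∀ (s : Finset ι), (∀ i ∈ s, (f i).1 ≤ (f i).2) →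
    ∃ (B : Finset ℝ) (t : Finset ι), t ⊆ s ∧
      (∀ x ∈ B, ∃ i ∈ s, x = (f i).2) ∧
      (∀ i ∈ s, ∃ x ∈ B, (f i).1 ≤ x ∧ x ≤ (f i).2) ∧
      (∀ i ∈ t, ∀ j ∈ t, i ≠ j → (f i).2 < (f j).1 ∨ (f j).2 < (f i).1) ∧
      B.card ≤ t.card := by
  intro s
  induction s using Finset.strongInduction with
  | _ s ih =>
    intro hf
    rcases s.eq_empty_or_nonempty with rfl | hs
    · exact ⟨∅, ∅, by simp, by simp, by simp, by simp, le_rfl⟩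
    · obtain ⟨i0, hi0, hmin⟩ := s.exists_min_image (fun i => (f i).2) hs
      set r0 := (f i0).2 with hr0
      set s' := s.filter (fun i => r0 < (f i).1) with hs'
      have hi0s' : i0 ∉ s' := by
        simp only [hs', Finset.mem_filter]
        rintro ⟨-, h⟩
        exact absurd (hf i0 hi0) (not_le.2 h)
      have hss : s' ⊂ s :=
        (Finset.ssubset_iff_of_subset (Finset.filter_subset _ _)).2 ⟨i0, hi0, hi0s'⟩
      obtain ⟨B', t', ht's, hB'ep, hB'hit, ht'dis, hcard⟩ := ih s' hss
        (fun i hi => hf i (Finset.mem_of_mem_filter _ hi))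
      have ht's2 : t' ⊆ s := ht's.trans (Finset.filter_subset _ _)
      have hi0t' : i0 ∉ t' := fun h => hi0s' (ht's h)
      refine ⟨insert r0 B', insert i0 t', Finset.insert_subset hi0 ht's2, ?_, ?_, ?_, ?_⟩
      · intro x hx
        rcases Finset.mem_insert.1 hx with rfl | hx
        · exact ⟨i0, hi0, rfl⟩
        · obtain ⟨i, hi, hix⟩ := hB'ep x hx
          exact ⟨i, Finset.mem_of_mem_filter _ hi, hix⟩
      · intro i hi
        by_cases hc : r0 < (f i).1
        · obtain ⟨x, hx, h1, h2⟩ := hB'hit i (Finset.mem_filter.2 ⟨hi, hc⟩)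
          exact ⟨x, Finset.mem_insert_of_mem hx, h1, h2⟩
        · exact ⟨r0, Finset.mem_insert_self _ _, not_lt.1 hc, hmin i hi⟩
      · intro i hi j hj hij
        rcases Finset.mem_insert.1 hi with rfl | hi' <;>
          rcases Finset.mem_insert.1 hj with rfl | hj'
        · exact absurd rfl hij
        · exact Or.inl (Finset.mem_filter.1 (ht's hj')).2
        · exact Or.inr (Finset.mem_filter.1 (ht's hi')).2
        · exact ht'dis i hi' j hj' hij
      · rw [Finset.card_insert_of_notMem hi0t']
        exact (Finset.card_insert_le _ _).trans (Nat.succ_le_succ hcard)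


noncomputable instance instFintypeQuotSetoid {V : Type*} [Fintype V] (s : Setoid V) :
    Fintype (Quotient s) :=
  @Quotient.fintype V _ s (fun _ _ => Classical.dec _)


lemma reach_decomp {V : Type*} {H H' : SimpleGraph V} {u v : V}
    (hadj : ∀ x y, H'.Adj x y → H.Adj x y ∨ s(x, y) = s(u, v)) {a b : V}
    (h : H'.Reachable a b) :
    H.Reachable a b ∨
      ((H.Reachable a u ∨ H.Reachable a v) ∧ (H.Reachable b u ∨ H.Reachable b v)) := by
  obtain ⟨w⟩ := h
  induction w with
  | nil => exact Or.inl (SimpleGraph.Reachable.refl _)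
  | @cons x c b h' p ih =>
    rcases hadj _ _ h' with hH | he
    · rcases ih with h1 | ⟨h1, h2⟩
      · exact Or.inl ((SimpleGraph.Adj.reachable hH).trans h1)
      · refine Or.inr ⟨?_, h2⟩
        rcases h1 with h1 | h1
        · exact Or.inl ((SimpleGraph.Adj.reachable hH).trans h1)
        · exact Or.inr ((SimpleGraph.Adj.reachable hH).trans h1)
    · rw [Sym2.eq_iff] at he
      have hcb : H.Reachable b u ∨ H.Reachable b v := by
        rcases ih with h1 | ⟨hc, hb⟩
        · rcases he with ⟨rfl, rfl⟩ | ⟨rfl, rfl⟩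
          · exact Or.inr h1.symm
          · exact Or.inl h1.symm
        · exact hb
      rcases he with ⟨rfl, rfl⟩ | ⟨rfl, rfl⟩
      · exact Or.inr ⟨Or.inl (SimpleGraph.Reachable.refl _), hcb⟩
      · exact Or.inr ⟨Or.inr (SimpleGraph.Reachable.refl _), hcb⟩

lemma card_quotient_ge {V : Type*} [Fintype V] [DecidableEq V] (G : SimpleGraph V)
    (X : Finset (Sym2 V)) :
    Fintype.card V ≤ Fintype.card (Quotient (edgeSub G ↑X).reachableSetoid) + X.card := by
  classical
  induction X using Finset.induction with
  | empty =>
    have hinj : Function.Injective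
        (Quotient.mk (edgeSub G (↑(∅ : Finset (Sym2 V)))).reachableSetoid) := by
      intro a b hab
      have h : (edgeSub G (↑(∅ : Finset (Sym2 V)))).Reachable a b := Quotient.exact hab
      obtain ⟨w⟩ := h
      cases w with
      | nil => rfl
      | cons h' _ => simp at h'; exact absurd h'.2 (by simp)
    simpa using Fintype.card_le_of_injective _ hinj
  | @insert e X he ih =>
    obtain ⟨⟨u, v⟩, rfl⟩ := Quot.exists_rep e
    set S' := (edgeSub G (↑X : Set (Sym2 V))).reachableSetoid with hS'
    set S := (edgeSub G (↑(insert s(u,v) X) : Set (Sym2 V))).reachableSetoid with hS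
    let φ : Quotient S' → Quotient S :=
      Quotient.map' id (fun a b hab => by
        refine SimpleGraph.Reachable.mono ?_ hab
        intro x y hxy
        exact ⟨hxy.1, by simpa using Or.inr hxy.2⟩)
    have hφmk : ∀ a : V, φ (Quotient.mk S' a) = Quotient.mk S a := fun a => rfl
    have hinj : Set.InjOn φ ((Finset.univ.erase (Quotient.mk S' u)) : Finset (Quotient S')) := by
      intro x hx y hy hxy
      obtain ⟨a, rfl⟩ := Quotient.exists_rep x
      obtain ⟨b, rfl⟩ := Quotient.exists_rep y
      simp only [Finset.coe_erase, Set.mem_diff, Finset.coe_univ, Set.mem_univ, true_and,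
        Set.mem_singleton_iff] at hx hy
      rw [hφmk, hφmk] at hxy
      have hr : (edgeSub G (↑(insert s(u,v) X) : Set (Sym2 V))).Reachable a b :=
        Quotient.exact hxy
      have hdec := reach_decomp (H := edgeSub G (↑X : Set (Sym2 V))) (u := u) (v := v)
        (fun x y hxy => by
          rcases hxy with ⟨hadj, hmem⟩
          simp only [Finset.coe_insert, Set.mem_insert_iff] at hmem
          rcases hmem with h | h
          · exact Or.inr h
          · exact Or.inl ⟨hadj, h⟩) hr
      rcases hdec with h | ⟨ha, hb⟩
      · exact Quotient.sound h
      · have ha' : Quotient.mk S' a = Quotient.mk S' v := by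
          rcases ha with h | h
          · exact absurd (Quotient.sound h) hx
          · exact Quotient.sound h
        have hb' : Quotient.mk S' b = Quotient.mk S' v := by
          rcases hb with h | h
          · exact absurd (Quotient.sound h) hy
          · exact Quotient.sound h
        rw [ha', hb']
    have hcard : (Finset.univ.erase (Quotient.mk S' u)).card ≤ Fintype.card (Quotient S) := by
      have := Finset.card_le_card_of_injOn φ (fun x _ => Finset.mem_univ _) hinj
      simpa using this
    rw [Finset.card_erase_of_mem (Finset.mem_univ _), Finset.card_univ] at hcard
    rw [Finset.card_insert_of_notMem he]
    have := ih
    omega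
lemma class_union_pre {n : ℕ} (J : Fin n → ℝ × ℝ)
    (X : Set (Sym2 (Fin n))) (a : Fin n) :
    IsPreconnected (⋃ v ∈ {v | (edgeSub (intervalGraph J) X).Reachable v a},
      Set.Icc (J v).1 (J v).2) := by
  set H := edgeSub (intervalGraph J) X with hH
  set t : Set (Fin n) := {v | H.Reachable v a} with ht
  refine IsPreconnected.biUnion_of_reflTransGen (fun i _ => isPreconnected_Icc) ?_
  intro i hi j hj
  have hij : H.Reachable i j := hi.trans hj.symm
  rw [SimpleGraph.reachable_iff_reflTransGen] at hij
  -- upgrade: every step gives interval intersection and membership in t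
  have key : ∀ b, Relation.ReflTransGen H.Adj i b → i ∈ t →
      Relation.ReflTransGen
        (fun p q => (Set.Icc (J p).1 (J p).2 ∩ Set.Icc (J q).1 (J q).2).Nonempty ∧ p ∈ t) i b := by
    intro b hb hit
    induction hb with
    | refl => exact Relation.ReflTransGen.refl
    | @tail c d hic hcd ihc =>
      have hct : c ∈ t := by
        have h2 : H.Reachable i c := (SimpleGraph.reachable_iff_reflTransGen i c).2 hic
        exact h2.symm.trans hit
      refine (ihc).tail ⟨?_, hct⟩
      exact hcd.1.2
  exact key j hij hi

lemma dir2 {n : ℕ} (J : Fin n → ℝ × ℝ) (hJ : ∀ v, (J v).1 ≤ (J v).2)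
    (X : Finset (Sym2 (Fin n))) :
    ∃ B : Finset ℝ, (∀ x ∈ B, ∃ v : Fin n, x = (J v).2) ∧
      (Finset.univ.filter fun v : Fin n =>
        ∀ x ∈ B, ¬ ((J v).1 ≤ x ∧ x ≤ (J v).2)).card ≤ X.card ∧
      B.card ≤ indepNum (contract (intervalGraph J) ↑X) := by
  classical
  set G := intervalGraph J with hG
  set S := (edgeSub G ↑X).reachableSetoid with hS
  set cset : Quotient S → Finset (Fin n) :=
    fun c => Finset.univ.filter (fun v => Quotient.mk S v = c) with hcset
  have hmemc : ∀ c v, v ∈ cset c ↔ Quotient.mk S v = c := by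
    intro c v; simp [hcset]
  have hne : ∀ c : Quotient S, (cset c).Nonempty :=
    fun c => ⟨c.out, (hmemc c c.out).2 c.out_eq⟩
  set F : Quotient S → ℝ × ℝ := fun c =>
    ((cset c).inf' (hne c) (fun v => (J v).1), (cset c).sup' (hne c) (fun v => (J v).2))
    with hF
  have hsub : ∀ c, ∀ v ∈ cset c,
      Set.Icc (J v).1 (J v).2 ⊆ Set.Icc (F c).1 (F c).2 := by
    intro c v hv
    exact Set.Icc_subset_Icc (Finset.inf'_le (fun v => (J v).1) hv) (Finset.le_sup' (fun v => (J v).2) hv)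
  have hFle : ∀ c, (F c).1 ≤ (F c).2 := by
    intro c
    obtain ⟨v, hv⟩ := hne c
    exact le_trans (Finset.inf'_le (fun v => (J v).1) hv) (le_trans (hJ v) (Finset.le_sup' (fun v => (J v).2) hv))
  have hcover : ∀ c, ∀ x ∈ Set.Icc (F c).1 (F c).2,
      ∃ v ∈ cset c, x ∈ Set.Icc (J v).1 (J v).2 := by
    intro c x hx
    have hsetEq : {v : Fin n | (edgeSub G ↑X).Reachable v c.out} = ↑(cset c) := by
      ext v
      simp only [Set.mem_setOf_eq, Finset.coe_filter, hcset, Finset.mem_univ, true_and,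
        Set.mem_setOf_eq]
      constructor
      · intro h; rw [← c.out_eq]; exact Quotient.sound h
      · intro h; exact Quotient.exact (h.trans c.out_eq.symm)
    have hpre := class_union_pre J (↑X : Set (Sym2 (Fin n))) c.out
    set U := ⋃ v ∈ {v : Fin n | (edgeSub G ↑X).Reachable v c.out},
      Set.Icc (J v).1 (J v).2 with hU
    have hmemU : ∀ y, y ∈ U ↔ ∃ v ∈ cset c, y ∈ Set.Icc (J v).1 (J v).2 := by
      intro y
      rw [hU, hsetEq]
      simp
      tauto
    obtain ⟨v1, hv1, hv1e⟩ := Finset.exists_mem_eq_inf' (hne c) (fun v => (J v).1)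
    obtain ⟨v2, hv2, hv2e⟩ := Finset.exists_mem_eq_sup' (hne c) (fun v => (J v).2)
    have hL : (F c).1 ∈ U := by
      rw [hmemU]
      exact ⟨v1, hv1, by rw [hF]; simp only [hv1e]; exact ⟨le_refl _, hJ v1⟩⟩
    have hR : (F c).2 ∈ U := by
      rw [hmemU]
      exact ⟨v2, hv2, by rw [hF]; simp only [hv2e]; exact ⟨hJ v2, le_refl _⟩⟩
    have := hpre.Icc_subset hL hR hx
    exact (hmemU x).1 this
  obtain ⟨B, t, -, hBep, hBhit, htdis, hBcard⟩ :=
    greedy F Finset.univ (fun i _ => hFle i)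
  have hep : ∀ x ∈ B, ∃ v : Fin n, x = (J v).2 := by
    intro x hx
    obtain ⟨c, -, hc⟩ := hBep x hx
    obtain ⟨v, -, hv⟩ := Finset.exists_mem_eq_sup' (hne c) (fun v => (J v).2)
    exact ⟨v, by rw [hc, hF]; exact hv⟩
  have hgc : ∀ c : Quotient S, ∃ v, v ∈ cset c ∧
      ∃ x ∈ B, (J v).1 ≤ x ∧ x ≤ (J v).2 := by
    intro c
    obtain ⟨x, hxB, hx1, hx2⟩ := hBhit c (Finset.mem_univ _)
    obtain ⟨v, hv, hvx⟩ := hcover c x ⟨hx1, hx2⟩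
    exact ⟨v, hv, x, hxB, hvx.1, hvx.2⟩
  choose gv hgv1 hgv2 using hgc
  refine ⟨B, hep, ?_, ?_⟩
  · -- bad count
    set bad := Finset.univ.filter fun v : Fin n =>
        ∀ x ∈ B, ¬ ((J v).1 ≤ x ∧ x ≤ (J v).2) with hbaddef
    have hginj : Function.Injective gv := by
      intro c d h
      have h1 := (hmemc c (gv c)).1 (hgv1 c)
      have h2 := (hmemc d (gv d)).1 (hgv1 d)
      rw [← h1, ← h2, h]
    have hdisj : ∀ c, gv c ∉ bad := by
      intro c hmem
      rw [hbaddef, Finset.mem_filter] at hmem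
      obtain ⟨x, hxB, hx1, hx2⟩ := hgv2 c
      exact hmem.2 x hxB ⟨hx1, hx2⟩
    have hsubbad : bad ⊆ Finset.univ \ Finset.univ.image gv := by
      intro v hv
      rw [Finset.mem_sdiff]
      refine ⟨Finset.mem_univ _, ?_⟩
      intro hmem
      obtain ⟨c, -, rfl⟩ := Finset.mem_image.1 hmem
      exact hdisj c hv
    have h1 : bad.card ≤ n - Fintype.card (Quotient S) := by
      have := Finset.card_le_card hsubbad
      rwa [Finset.card_sdiff_of_subset (Finset.subset_univ _), Finset.card_univ,
        Finset.card_image_of_injective _ hginj, Finset.card_univ, Fintype.card_fin] at this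
    have h2 := card_quotient_ge G X
    rw [Fintype.card_fin] at h2
    rw [hS] at h1
    omega
  · -- independence
    refine hBcard.trans ?_
    have hbdd : BddAbove {m : ℕ | ∃ s : Finset (Quotient S),
        (↑s : Set (Quotient S)).Pairwise (fun u v => ¬ (contract G ↑X).Adj u v) ∧
        s.card = m} := by
      refine ⟨Fintype.card (Quotient S), ?_⟩
      rintro m ⟨s, -, rfl⟩
      exact Finset.card_le_univ s
    refine le_csSup hbdd ⟨t, ?_, rfl⟩
    intro c hc d hd hcd hadj
    obtain ⟨-, u', v', hu, hv, hne', hx⟩ := hadj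
    obtain ⟨x, hx1, hx2⟩ := hx
    have hxc : x ∈ Set.Icc (F c).1 (F c).2 :=
      hsub c u' ((hmemc c u').2 hu) hx1
    have hxd : x ∈ Set.Icc (F d).1 (F d).2 :=
      hsub d v' ((hmemc d v').2 hv) hx2
    rcases htdis c (Finset.mem_coe.1 hc) d (Finset.mem_coe.1 hd) hcd with h | h
    · rw [Set.mem_Icc] at hxc hxd; linarith
    · rw [Set.mem_Icc] at hxc hxd; linarith

section dir1
variable {n : ℕ} (J : Fin n → ℝ × ℝ)

lemma dir1 (hconn : (intervalGraph J).Connected) (k : ℕ) (hk : k < n)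
    (B : Finset ℝ)
    (hbad : (Finset.univ.filter fun v : Fin n =>
      ∀ x ∈ B, ¬ ((J v).1 ≤ x ∧ x ≤ (J v).2)).card ≤ k) :
    ∃ X : Finset (Sym2 (Fin n)), ↑X ⊆ (intervalGraph J).edgeSet ∧ X.card ≤ k ∧
      indepNum (contract (intervalGraph J) ↑X) ≤ B.card := by
  classical
  set G := intervalGraph J with hG
  set bad := Finset.univ.filter fun v : Fin n =>
      ∀ x ∈ B, ¬ ((J v).1 ≤ x ∧ x ≤ (J v).2) with hbaddef
  have hgood : ∃ g : Fin n, g ∉ bad := by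
    by_contra h
    push_neg at h
    have : (Finset.univ : Finset (Fin n)) ⊆ bad := fun v _ => h v
    have := Finset.card_le_card this
    simp at this
    omega
  obtain ⟨g, hg⟩ := hgood
  have hnext : ∀ u : Fin n, ∃ w, u ∈ bad → G.Adj u w ∧ G.dist w g < G.dist u g := by
    intro u
    by_cases hu : u ∈ bad
    · have hne : u ≠ g := fun h => hg (h ▸ hu)
      have hr : G.Reachable u g := hconn.preconnected u g
      obtain ⟨p, hp⟩ := hr.exists_walk_length_eq_dist
      cases p with
      | nil => exact absurd rfl hne
      | @cons _ c _ h' q =>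
        refine ⟨c, fun _ => ⟨h', ?_⟩⟩
        have h2 : G.dist c g ≤ q.length := SimpleGraph.dist_le q
        simp [SimpleGraph.Walk.length_cons] at hp
        omega
    · exact ⟨u, fun h => absurd h hu⟩
  choose nxt hnxt using hnext
  set X := bad.image (fun u => s(u, nxt u)) with hX
  have hXE : ↑X ⊆ G.edgeSet := by
    intro e he
    simp only [hX, Finset.coe_image, Set.mem_image, Finset.mem_coe] at he
    obtain ⟨u, hu, rfl⟩ := he
    exact (hnxt u hu).1
  have hXcard : X.card ≤ k := (Finset.card_image_le).trans hbad
  set S := (edgeSub G ↑X).reachableSetoid with hS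
  have claim : ∀ d : ℕ, ∀ u : Fin n, G.dist u g ≤ d →
      ∃ w, w ∉ bad ∧ Quotient.mk S w = Quotient.mk S u := by
    intro d
    induction d with
    | zero =>
      intro u hu
      by_cases hub : u ∈ bad
      · have := (hnxt u hub).2; omega
      · exact ⟨u, hub, rfl⟩
    | succ d ih =>
      intro u hu
      by_cases hub : u ∈ bad
      · obtain ⟨hadj, hlt⟩ := hnxt u hub
        have hmem : s(u, nxt u) ∈ X := Finset.mem_image_of_mem _ hub
        have hadj' : (edgeSub G ↑X).Adj u (nxt u) := ⟨hadj, by simpa using hmem⟩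
        have hmk : Quotient.mk S (nxt u) = Quotient.mk S u :=
          Quotient.sound hadj'.symm.reachable
        obtain ⟨w, hw1, hw2⟩ := ih (nxt u) (by omega)
        exact ⟨w, hw1, hw2.trans hmk⟩
      · exact ⟨u, hub, rfl⟩
  have hw : ∀ c : Quotient S, ∃ w, w ∉ bad ∧ Quotient.mk S w = c := by
    intro c
    obtain ⟨w, h1, h2⟩ := claim (G.dist c.out g) c.out le_rfl
    exact ⟨w, h1, h2.trans c.out_eq⟩
  choose w hw1 hw2 using hw
  refine ⟨X, hXE, hXcard, ?_⟩
  have hb : ∀ c : Quotient S, ∃ x ∈ B, (J (w c)).1 ≤ x ∧ x ≤ (J (w c)).2 := by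
    intro c
    have h1 := hw1 c
    rw [hbaddef, Finset.mem_filter] at h1
    push_neg at h1
    exact h1 (Finset.mem_univ _)
  choose bx hbxB hbx1 hbx2 using hb
  refine csSup_le ⟨0, ∅, by simp, by simp⟩ ?_
  rintro m ⟨s, hs, rfl⟩
  refine Finset.card_le_card_of_injOn bx (fun c _ => hbxB c) ?_
  intro c hc d hd hcd
  by_contra hne
  have hwcd : w c ≠ w d := fun h => hne (by rw [← hw2 c, ← hw2 d, h])
  have hadj : (contract G ↑X).Adj c d := by
    refine ⟨hne, w c, w d, hw2 c, hw2 d, hwcd, ⟨bx c, ⟨hbx1 c, hbx2 c⟩, ?_⟩⟩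
    rw [hcd]
    exact ⟨hbx1 d, hbx2 d⟩
  exact hs hc hd hne hadj

end dir1

/-- For a connected interval graph `G` on `n` intervals and `k < n`:
`min {α(G/X) : |X| ≤ k}` equals the minimum of `|B|` over all sets `B` of
endpoints such that at most `k` intervals are disjoint from `B`. -/
theorem stmt15 {n : ℕ} (J : Fin n → ℝ × ℝ) (hJ : ∀ v, (J v).1 ≤ (J v).2)
    (hconn : (intervalGraph J).Connected) (k : ℕ) (hk : k < n) :
    sInf {m : ℕ | ∃ X : Finset (Sym2 (Fin n)),
        ↑X ⊆ (intervalGraph J).edgeSet ∧ X.card ≤ k ∧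
        indepNum (contract (intervalGraph J) ↑X) = m}
      = sInf {m : ℕ | ∃ B : Finset ℝ,
          (∀ x ∈ B, ∃ v : Fin n, x = (J v).2) ∧
          (Finset.univ.filter fun v : Fin n =>
            ∀ x ∈ B, ¬ ((J v).1 ≤ x ∧ x ≤ (J v).2)).card ≤ k ∧
          B.card = m} := by
  classical
  set G := intervalGraph J with hG
  have hLne : {m : ℕ | ∃ X : Finset (Sym2 (Fin n)),
      ↑X ⊆ (intervalGraph J).edgeSet ∧ X.card ≤ k ∧
      indepNum (contract (intervalGraph J) ↑X) = m}.Nonempty := by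
    refine ⟨indepNum (contract (intervalGraph J) ↑(∅ : Finset (Sym2 (Fin n)))),
      ∅, by simp, Nat.zero_le k, rfl⟩
  apply le_antisymm
  · have hRne : {m : ℕ | ∃ B : Finset ℝ,
        (∀ x ∈ B, ∃ v : Fin n, x = (J v).2) ∧
        (Finset.univ.filter fun v : Fin n =>
          ∀ x ∈ B, ¬ ((J v).1 ≤ x ∧ x ≤ (J v).2)).card ≤ k ∧
        B.card = m}.Nonempty := by
      obtain ⟨B, hep, hbad, -⟩ := dir2 J hJ (∅ : Finset (Sym2 (Fin n)))
      exact ⟨B.card, B, hep, le_trans hbad (by simp), rfl⟩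
    obtain ⟨B, hep, hbad, hcard⟩ := Nat.sInf_mem hRne
    obtain ⟨X, hXE, hXc, hind⟩ := dir1 J hconn k hk B hbad
    refine le_trans (Nat.sInf_le ⟨X, hXE, hXc, rfl⟩) ?_
    rw [← hcard]
    exact hind
  · obtain ⟨X, hXE, hXc, hieq⟩ := Nat.sInf_mem hLne
    obtain ⟨B, hep, hbadX, hBle⟩ := dir2 J hJ X
    refine le_trans (Nat.sInf_le ⟨B, hep, le_trans hbadX hXc, rfl⟩) ?_
    rw [← hieq]
    exact hBle
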